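/- The function h(Δ) = (exp(-2ΓΔ) − 1 + 2ΓΔ)/(2Γ²Δ²) is strictly decreasing in Δ on (0,∞) for fixed Γ > 0 (i.e., speckle contrast decreases monotonically with exposure time under exponential decorrelation). -/

import Mathlib

open Real

lemma aux1 (x : ℝ) (hx : 0 < x) : 0 < 1 + (x - 1) * Real.exp x := by
  have hmono : StrictMonoOn (fun x : ℝ => 1 + (x - 1) * Real.exp x) (Set.Ici 0) := by
    apply strictMonoOn_of_deriv_pos (convex_Ici 0)
    · fun_prop
    · intro y hy
      rw [interior_Ici] at hy
      have hy' : 0 < y := hy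
      have hd : HasDerivAt (fun x : ℝ => 1 + (x - 1) * Real.exp x) (y * Real.exp y) y := by
        have h1 : HasDerivAt (fun x : ℝ => (x - 1) * Real.exp x)
            (1 * Real.exp y + (y - 1) * Real.exp y) y :=
          (((hasDerivAt_id y).sub_const 1).mul (Real.hasDerivAt_exp y))
        have h2 := h1.const_add 1
        exact h2.congr_deriv (by ring)
      rw [hd.deriv]
      positivity
  have := hmono Set.self_mem_Ici (Set.mem_Ici.2 hx.le) hx
  simpa using this

lemma aux2 (x : ℝ) (hx : 0 < x) : (2 - x) * Real.exp x < x + 2 := by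
  have hmono : StrictMonoOn (fun x : ℝ => x + 2 - (2 - x) * Real.exp x) (Set.Ici 0) := by
    apply strictMonoOn_of_deriv_pos (convex_Ici 0)
    · fun_prop
    · intro y hy
      rw [interior_Ici] at hy
      have hy' : 0 < y := hy
      have hd : HasDerivAt (fun x : ℝ => x + 2 - (2 - x) * Real.exp x)
          (1 + (y - 1) * Real.exp y) y := by
        have h1 : HasDerivAt (fun x : ℝ => (2 - x) * Real.exp x)
            ((-1) * Real.exp y + (2 - y) * Real.exp y) y :=
          (((hasDerivAt_id y).const_sub 2).mul (Real.hasDerivAt_exp y))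
        have h2 := ((hasDerivAt_id y).add_const 2).sub h1
        exact h2.congr_deriv (by ring)
      rw [hd.deriv]
      exact aux1 y hy'
  have := hmono Set.self_mem_Ici (Set.mem_Ici.2 hx.le) hx
  simp only [Real.exp_zero] at this
  nlinarith

lemma key (x : ℝ) (hx : 0 < x) : 2 - x - (x + 2) * Real.exp (-x) < 0 := by
  have h1 := aux2 x hx
  have h2 : Real.exp (-x) = (Real.exp x)⁻¹ := Real.exp_neg x
  have h3 : 0 < Real.exp x := Real.exp_pos x
  rw [h2]
  have h4 : Real.exp x * (Real.exp x)⁻¹ = 1 := mul_inv_cancel₀ (ne_of_gt h3)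
  nlinarith [mul_pos h3 (inv_pos.2 h3)]

noncomputable def gfun (x : ℝ) : ℝ := 2 * (Real.exp (-x) - 1 + x) / x ^ 2

lemma gAnti : StrictAntiOn gfun (Set.Ioi 0) := by
  apply strictAntiOn_of_deriv_neg (convex_Ioi 0)
  · apply ContinuousOn.div
    · fun_prop
    · fun_prop
    · intro x hx
      have hx' : 0 < x := hx
      positivity
  · intro x hx
    rw [interior_Ioi] at hx
    have hx' : 0 < x := hx
    have hN : HasDerivAt (fun x : ℝ => 2 * (Real.exp (-x) - 1 + x))
        (2 * (1 - Real.exp (-x))) x := by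
      have h1 : HasDerivAt (fun x : ℝ => Real.exp (-x)) (Real.exp (-x) * (-1)) x :=
        (hasDerivAt_neg x).exp
      have h2 := ((h1.sub_const 1).add (hasDerivAt_id x)).const_mul 2
      exact h2.congr_deriv (by ring)
    have hD : HasDerivAt (fun x : ℝ => x ^ 2) (2 * x) x := by
      have := hasDerivAt_pow 2 x
      simpa using this
    have hg : HasDerivAt gfun
        ((2 * (1 - Real.exp (-x)) * x ^ 2 - 2 * (Real.exp (-x) - 1 + x) * (2 * x)) /
          (x ^ 2) ^ 2) x := hN.div hD (by positivity)
    rw [hg.deriv]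
    apply div_neg_of_neg_of_pos
    · have hk := key x hx'
      nlinarith [mul_neg_of_pos_of_neg hx' hk]
    · positivity

/-- `h(Δ) = (exp(-2ΓΔ) − 1 + 2ΓΔ)/(2Γ²Δ²)` is strictly decreasing
on `(0,∞)` for fixed `Γ > 0`. -/
theorem stmt_9 (Γ : ℝ) (hΓ : 0 < Γ)
    (h : ℝ → ℝ)
    (hh : ∀ Δ, h Δ = (Real.exp (-2 * Γ * Δ) - 1 + 2 * Γ * Δ) / (2 * Γ ^ 2 * Δ ^ 2)) :
    StrictAntiOn h (Set.Ioi 0) := by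
  have hrw : ∀ Δ : ℝ, 0 < Δ → h Δ = gfun (2 * Γ * Δ) := by
    intro Δ hΔ
    rw [hh Δ, gfun]
    rw [show -(2 * Γ * Δ) = -2 * Γ * Δ by ring]
    have hΓΔ : (2 * Γ * Δ) ^ 2 = 4 * (Γ ^ 2 * Δ ^ 2) := by ring
    field_simp
  intro a ha b hb hab
  have ha' : 0 < a := ha
  have hb' : 0 < b := hb
  rw [hrw a ha', hrw b hb']
  exact gAnti (by simp [Set.mem_Ioi]; positivity) (by simp [Set.mem_Ioi]; positivity)
    (by nlinarith)
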